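/- Let Φ(u) = e^{ν(u)} - 1 be an exponential Young function. A measurable function f on a probability space satisfies sup_{t>0} Φ(t/c)·T_f(t) < ∞ for every c > 0 if and only if ∫ Φ(k|f|) dP < ∞ for every k > 0. -/

import Mathlib

open MeasureTheory ENNReal Set Filter

/-- Tail (distribution) function `T_f(t) = μ {x : |f x| ≥ t}`. -/
noncomputable def tailFn {X : Type*} [MeasurableSpace X] (μ : Measure X)
    (f : X → ℝ) (t : ℝ) : ℝ≥0∞ := μ {x | t ≤ |f x|}

/-- Decreasing rearrangement `f*(s) = inf {t ≥ 0 : T_f(t) ≤ s}`. -/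
noncomputable def rearr {X : Type*} [MeasurableSpace X] (μ : Measure X)
    (f : X → ℝ) (s : ℝ) : ℝ :=
  sInf {t : ℝ | 0 ≤ t ∧ tailFn μ f t ≤ ENNReal.ofReal s}

/-- `f**(t) = t⁻¹ ∫_0^t f*(s) ds`. -/
noncomputable def rr {X : Type*} [MeasurableSpace X] (μ : Measure X)
    (f : X → ℝ) (t : ℝ) : ℝ := t⁻¹ * ∫ s in (0:ℝ)..t, rearr μ f s

/-- `‖f‖*_w = sup_{t>0} w(t) f*(t)` (as an `ℝ≥0∞`-valued functional). -/
noncomputable def wnormStar {X : Type*} [MeasurableSpace X] (μ : Measure X)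
    (w : ℝ → ℝ) (f : X → ℝ) : ℝ≥0∞ :=
  ⨆ t ∈ Set.Ioi (0:ℝ), ENNReal.ofReal (w t * rearr μ f t)

/-- `‖f‖_w = sup_{t>0} w(t) f**(t)` (as an `ℝ≥0∞`-valued functional). -/
noncomputable def wnorm' {X : Type*} [MeasurableSpace X] (μ : Measure X)
    (w : ℝ → ℝ) (f : X → ℝ) : ℝ≥0∞ :=
  ⨆ t ∈ Set.Ioi (0:ℝ), ENNReal.ofReal (w t * rr μ f t)

/-- `γ(w) = sup_{t>0} (w(t)/t) ∫_0^t du / w(u)`. -/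
noncomputable def gammaW (w : ℝ → ℝ) : ℝ≥0∞ :=
  ⨆ t ∈ Set.Ioi (0:ℝ), ENNReal.ofReal ((w t / t) * ∫ s in (0:ℝ)..t, (w s)⁻¹)

lemma auxReal (ν : ℝ → ℝ) (hνconv : ConvexOn ℝ Set.univ ν)
    (hmono : MonotoneOn ν (Set.Ici 0)) (hν0 : ν 0 = 0) (ha : 0 < ν 4)
    (n : ℕ) (hn : 1 ≤ n) :
    Real.exp (ν ((n : ℝ) + 1)) - 1 ≤
      ((1 - Real.exp (-(ν 4)))⁻¹ * Real.exp (-(ν 4) / 2) ^ n) *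
        (Real.exp (ν (4 * (n : ℝ))) - 1) := by
  set a : ℝ := ν 4 with ha_def
  set N : ℝ := (n : ℝ) with hN_def
  have hN : 1 ≤ N := by simp only [hN_def]; exact_mod_cast hn
  set D : ℝ := ν (4 * N) with hD_def
  set b : ℝ := ν (N + 1) with hb_def
  have hhalf : (0:ℝ) ≤ 1/2 := by norm_num
  -- b ≤ D / 2
  have hb : b ≤ D / 2 := by
    have h2N : ν (N + 1) ≤ ν (2 * N) := by
      apply hmono _ _ (by linarith)
      · simp only [Set.mem_Ici]; linarith
      · simp only [Set.mem_Ici]; linarith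
    have h := hνconv.2 (Set.mem_univ (4 * N)) (Set.mem_univ (0:ℝ)) hhalf hhalf (by norm_num)
    simp only [smul_eq_mul, hν0, mul_zero, add_zero] at h
    have e : (1/2 : ℝ) * (4 * N) = 2 * N := by ring
    rw [e] at h
    simp only [hb_def, hD_def]
    linarith
  -- N * a ≤ D
  have hNpos : (0:ℝ) < N := by linarith
  have hNa : N * a ≤ D := by
    have h1N : (0:ℝ) ≤ 1 / N := by positivity
    have h := hνconv.2 (Set.mem_univ (4 * N)) (Set.mem_univ (0:ℝ)) h1N
      (by rw [sub_nonneg, div_le_one hNpos]; exact hN : (0:ℝ) ≤ 1 - 1/N)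
      (by ring)
    simp only [smul_eq_mul, hν0, mul_zero, add_zero] at h
    have e : (1 / N : ℝ) * (4 * N) = 4 := by field_simp
    rw [e] at h
    have h' := mul_le_mul_of_nonneg_right h hNpos.le
    have e2 : 1 / N * ν (4 * N) * N = D := by field_simp; rw [hD_def, mul_comm]
    rw [e2] at h'
    linarith [h']
  have hDa : a ≤ D := by nlinarith
  have hδ : 0 < 1 - Real.exp (-a) := by
    have : Real.exp (-a) < 1 := Real.exp_lt_one_iff.mpr (by linarith)
    linarith
  have hpow : Real.exp (-a / 2) ^ n = Real.exp (N * (-a / 2)) := by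
    rw [← Real.exp_nat_mul]
  have h1 : Real.exp b - 1 ≤ Real.exp (N * (-a / 2)) * Real.exp D := by
    rw [← Real.exp_add]
    have hble : b ≤ N * (-a / 2) + D := by nlinarith
    have := Real.exp_le_exp.mpr hble
    have := Real.exp_pos b
    linarith
  have h2 : (1 - Real.exp (-a)) * Real.exp D ≤ Real.exp D - 1 := by
    have e : Real.exp (-a) * Real.exp D = Real.exp (D - a) := by
      rw [← Real.exp_add]; ring_nf
    have h1e : (1:ℝ) ≤ Real.exp (D - a) := Real.one_le_exp (by linarith)
    nlinarith
  have h3 : Real.exp D ≤ (1 - Real.exp (-a))⁻¹ * (Real.exp D - 1) :=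
    (le_inv_mul_iff₀ hδ).mpr h2
  have h4 : Real.exp (N * (-a / 2)) * Real.exp D ≤
      Real.exp (N * (-a / 2)) * ((1 - Real.exp (-a))⁻¹ * (Real.exp D - 1)) :=
    mul_le_mul_of_nonneg_left h3 (Real.exp_pos _).le
  calc Real.exp b - 1 ≤ Real.exp (N * (-a / 2)) * Real.exp D := h1
    _ ≤ Real.exp (N * (-a / 2)) * ((1 - Real.exp (-a))⁻¹ * (Real.exp D - 1)) := h4
    _ = ((1 - Real.exp (-a))⁻¹ * Real.exp (-a / 2) ^ n) * (Real.exp D - 1) := by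
        rw [hpow]; ring

theorem stmt11 {X : Type*} [MeasurableSpace X] (P : Measure X) [IsProbabilityMeasure P]
    (ν : ℝ → ℝ) (hνeven : ∀ u, ν (-u) = ν u) (hνconv : ConvexOn ℝ Set.univ ν)
    (hνcont : Continuous ν) (hνmono : StrictMonoOn ν (Set.Ici 0)) (hν0 : ν 0 = 0)
    (hνtop : Filter.Tendsto ν Filter.atTop Filter.atTop)
    (f : X → ℝ) (hf : Measurable f) :
    (∀ c : ℝ, 0 < c →
        (⨆ t ∈ Set.Ioi (0:ℝ),
          ENNReal.ofReal (Real.exp (ν (t / c)) - 1) * tailFn P f t) < ⊤)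
      ↔ (∀ k : ℝ, 0 < k →
        ∫⁻ x, ENNReal.ofReal (Real.exp (ν (k * |f x|)) - 1) ∂P < ⊤) := by
  have hmono : MonotoneOn ν (Set.Ici 0) := hνmono.monotoneOn
  constructor
  · -- hard direction
    intro h k hk
    have hc : (0:ℝ) < 1 / (4 * k) := by positivity
    have hS := h (1 / (4 * k)) hc
    set S : ℝ≥0∞ := ⨆ t ∈ Set.Ioi (0:ℝ),
      ENNReal.ofReal (Real.exp (ν (t / (1 / (4 * k)))) - 1) * tailFn P f t with hS_def
    have ha : 0 < ν 4 := by
      have := hνmono (Set.mem_Ici.mpr le_rfl) (Set.mem_Ici.mpr (by norm_num : (0:ℝ) ≤ 4))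
        (by norm_num)
      rwa [hν0] at this
    set δ : ℝ := 1 - Real.exp (-(ν 4)) with hδ_def
    set r : ℝ := Real.exp (-(ν 4) / 2) with hr_def
    have hr0 : 0 ≤ r := (Real.exp_pos _).le
    have hr1 : r < 1 := Real.exp_lt_one_iff.mpr (by linarith)
    -- the partition sets
    set A : ℕ → Set X := fun n => {x | (n:ℝ) ≤ k * |f x| ∧ k * |f x| < (n:ℝ) + 1} with hA_def
    have hcover : (⋃ n, A n) = Set.univ := by
      rw [Set.eq_univ_iff_forall]
      intro x
      refine Set.mem_iUnion.mpr ⟨⌊k * |f x|⌋₊, ?_, ?_⟩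
      · exact Nat.floor_le (by positivity)
      · exact Nat.lt_floor_add_one _
    -- per-n bound for the set integral
    have hbound : ∀ n : ℕ, (∫⁻ x in A n,
        ENNReal.ofReal (Real.exp (ν (k * |f x|)) - 1) ∂P) ≤
        ENNReal.ofReal (Real.exp (ν ((n:ℝ) + 1)) - 1) * P (A n) := by
      intro n
      calc (∫⁻ x in A n, ENNReal.ofReal (Real.exp (ν (k * |f x|)) - 1) ∂P)
          ≤ ∫⁻ _ in A n, ENNReal.ofReal (Real.exp (ν ((n:ℝ) + 1)) - 1) ∂P := by
            apply setLIntegral_mono measurable_const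
            intro x hx
            apply ENNReal.ofReal_le_ofReal
            have hx2 : k * |f x| ≤ (n:ℝ) + 1 := hx.2.le
            have := hmono (Set.mem_Ici.mpr (by positivity : (0:ℝ) ≤ k * |f x|))
              (Set.mem_Ici.mpr (by positivity : (0:ℝ) ≤ (n:ℝ) + 1)) hx2
            have := Real.exp_le_exp.mpr this
            linarith
        _ = ENNReal.ofReal (Real.exp (ν ((n:ℝ) + 1)) - 1) * P (A n) := setLIntegral_const _ _
    -- bound for n ≥ 1 using the weak-type hypothesis
    have hterm : ∀ n : ℕ, 1 ≤ n →
        ENNReal.ofReal (Real.exp (ν ((n:ℝ) + 1)) - 1) * P (A n) ≤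
          ENNReal.ofReal (δ⁻¹ * r ^ n) * S := by
      intro n hn
      have hNpos : (0:ℝ) < (n:ℝ) := by exact_mod_cast hn
      have htpos : (0:ℝ) < (n:ℝ) / k := by positivity
      -- P (A n) ≤ tailFn P f (n / k)
      have hPA : P (A n) ≤ tailFn P f ((n:ℝ) / k) := by
        apply measure_mono
        intro x hx
        have : (n:ℝ) ≤ k * |f x| := hx.1
        simp only [tailFn, Set.mem_setOf_eq]
        rw [div_le_iff₀ hk]
        linarith [this, mul_comm k |f x|]
      -- the sup bound at t = n / k
      have hsup : ENNReal.ofReal (Real.exp (ν (4 * (n:ℝ))) - 1) * tailFn P f ((n:ℝ) / k)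
          ≤ S := by
        have e : ((n:ℝ) / k) / (1 / (4 * k)) = 4 * (n:ℝ) := by
          field_simp
        have := le_iSup₂ (f := fun (t : ℝ) (_ : t ∈ Set.Ioi (0:ℝ)) =>
          ENNReal.ofReal (Real.exp (ν (t / (1 / (4 * k)))) - 1) * tailFn P f t)
          ((n:ℝ) / k) (Set.mem_Ioi.mpr htpos)
        rwa [e] at this
      have hkey := auxReal ν hνconv hmono hν0 ha n hn
      have hnn : (0:ℝ) ≤ δ⁻¹ * r ^ n := by
        have hδpos : (0:ℝ) < δ := by
          have : Real.exp (-(ν 4)) < 1 := Real.exp_lt_one_iff.mpr (by linarith)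
          simp only [hδ_def]; linarith
        positivity
      calc ENNReal.ofReal (Real.exp (ν ((n:ℝ) + 1)) - 1) * P (A n)
          ≤ ENNReal.ofReal ((δ⁻¹ * r ^ n) * (Real.exp (ν (4 * (n:ℝ))) - 1)) *
              tailFn P f ((n:ℝ) / k) :=
            mul_le_mul' (ENNReal.ofReal_le_ofReal hkey) hPA
        _ = ENNReal.ofReal (δ⁻¹ * r ^ n) *
              (ENNReal.ofReal (Real.exp (ν (4 * (n:ℝ))) - 1) * tailFn P f ((n:ℝ) / k)) := by
            rw [ENNReal.ofReal_mul hnn, mul_assoc]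
        _ ≤ ENNReal.ofReal (δ⁻¹ * r ^ n) * S := mul_le_mul_right hsup _
    -- assemble
    have hsum : Summable (fun n : ℕ => δ⁻¹ * r ^ (n + 1)) := by
      have := (summable_geometric_of_lt_one hr0 hr1).mul_left (δ⁻¹ * r)
      exact this.congr (fun n => by ring)
    have hgeo : (∑' n : ℕ, ENNReal.ofReal (δ⁻¹ * r ^ (n + 1))) < ⊤ := by
      have hδpos : (0:ℝ) < δ := by
        have : Real.exp (-(ν 4)) < 1 := Real.exp_lt_one_iff.mpr (by linarith)
        simp only [hδ_def]; linarith
      have hnn : ∀ n : ℕ, 0 ≤ δ⁻¹ * r ^ (n + 1) := fun n => by positivity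
      rw [← ENNReal.ofReal_tsum_of_nonneg hnn hsum]
      exact ENNReal.ofReal_lt_top
    calc (∫⁻ x, ENNReal.ofReal (Real.exp (ν (k * |f x|)) - 1) ∂P)
        = ∫⁻ x in ⋃ n, A n, ENNReal.ofReal (Real.exp (ν (k * |f x|)) - 1) ∂P := by
          rw [hcover, Measure.restrict_univ]
      _ ≤ ∑' n : ℕ, ∫⁻ x in A n, ENNReal.ofReal (Real.exp (ν (k * |f x|)) - 1) ∂P :=
          lintegral_iUnion_le _ _
      _ ≤ ∑' n : ℕ, ENNReal.ofReal (Real.exp (ν ((n:ℝ) + 1)) - 1) * P (A n) :=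
          ENNReal.tsum_le_tsum hbound
      _ < ⊤ := by
          rw [tsum_eq_zero_add' ENNReal.summable]
          apply ENNReal.add_lt_top.mpr
          constructor
          · exact ENNReal.mul_lt_top ENNReal.ofReal_lt_top (measure_lt_top _ _)
          · have hle : (∑' n : ℕ, ENNReal.ofReal (Real.exp (ν (((n+1 : ℕ):ℝ) + 1)) - 1) *
                P (A (n + 1))) ≤ ∑' n : ℕ, ENNReal.ofReal (δ⁻¹ * r ^ (n + 1)) * S := by
              apply ENNReal.tsum_le_tsum
              intro n
              have := hterm (n + 1) (Nat.le_add_left 1 n)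
              push_cast at this ⊢
              exact this
            refine lt_of_le_of_lt hle ?_
            rw [ENNReal.tsum_mul_right]
            exact ENNReal.mul_lt_top hgeo hS
  · -- easy direction
    intro h c hc
    have hk : (0:ℝ) < 1 / c := by positivity
    have hI := h (1 / c) hk
    apply lt_of_le_of_lt _ hI
    apply iSup₂_le
    intro t ht
    rw [Set.mem_Ioi] at ht
    have hmeasset : MeasurableSet {x | t ≤ |f x|} := measurableSet_le measurable_const hf.abs
    calc ENNReal.ofReal (Real.exp (ν (t / c)) - 1) * tailFn P f t
        = ∫⁻ _ in {x | t ≤ |f x|}, ENNReal.ofReal (Real.exp (ν (t / c)) - 1) ∂P := by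
          rw [setLIntegral_const]; rfl
      _ ≤ ∫⁻ x in {x | t ≤ |f x|},
            ENNReal.ofReal (Real.exp (ν ((1 / c) * |f x|)) - 1) ∂P := by
          apply setLIntegral_mono
          · exact (ENNReal.measurable_ofReal.comp
              (((hνcont.measurable.comp ((measurable_const.mul hf.abs))).exp.sub
                measurable_const)))
          · intro x hx
            apply ENNReal.ofReal_le_ofReal
            have h1 : t / c ≤ (1 / c) * |f x| := by
              have hx' : t ≤ |f x| := hx
              rw [div_eq_mul_inv, one_div, mul_comm c⁻¹]
              exact mul_le_mul_of_nonneg_right hx' (inv_nonneg.mpr hc.le)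
            have := hmono (Set.mem_Ici.mpr (by positivity : (0:ℝ) ≤ t / c))
              (Set.mem_Ici.mpr (by positivity : (0:ℝ) ≤ (1 / c) * |f x|)) h1
            have := Real.exp_le_exp.mpr this
            linarith
      _ ≤ ∫⁻ x, ENNReal.ofReal (Real.exp (ν ((1 / c) * |f x|)) - 1) ∂P :=
          setLIntegral_le_lintegral _ _
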